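/- Let c, f : ℝ → ℂ be continuous 2π-periodic functions, let λ ∈ ℝ, and set c₀ = (2π)⁻¹ ∫₀^{2π} c(t) dt. Assume λ c₀ ∉ ℤ. Then the unique differentiable 2π-periodic solution u of u′(t) + i λ c(t) u(t) = i f(t) is also given by the formula u(t) = i (e^{2πi λ c₀} − 1)⁻¹ ∫₀^{2π} exp(i λ ∫ₜ^{t+s} c(r) dr) f(t+s) ds. -/

import Mathlib

open Real

/-- Formula (2.9): in the nonresonant case `λ c₀ ∉ ℤ`, the (unique) `2π`-periodic
differentiable solution of `u' + i λ c u = i f` satisfies also the second explicit formula. -/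
theorem stmt6 (c f : ℝ → ℂ) (hc : Continuous c) (hf : Continuous f)
    (hcper : Function.Periodic c (2 * Real.pi)) (hfper : Function.Periodic f (2 * Real.pi))
    (lam : ℝ) (c₀ : ℂ)
    (hc₀ : c₀ = ((2 * Real.pi : ℝ) : ℂ)⁻¹ * ∫ t in (0:ℝ)..(2 * Real.pi), c t)
    (hnres : ∀ m : ℤ, (lam : ℂ) * c₀ ≠ (m : ℂ))
    (u : ℝ → ℂ) (hu : Differentiable ℝ u) (huper : Function.Periodic u (2 * Real.pi))
    (hode : ∀ t : ℝ, deriv u t + Complex.I * (lam : ℂ) * c t * u t = Complex.I * f t) :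
    ∀ t : ℝ, u t =
      Complex.I * (Complex.exp (2 * Real.pi * Complex.I * (lam : ℂ) * c₀) - 1)⁻¹ *
        ∫ s in (0:ℝ)..(2 * Real.pi),
          Complex.exp (Complex.I * (lam : ℂ) * ∫ r in t..(t + s), c r) * f (t + s) := by
  intro t
  have hπ : (0:ℝ) < 2 * Real.pi := by positivity
  -- derivative of the inner integral
  have hA : ∀ s : ℝ, HasDerivAt (fun s : ℝ => ∫ r in t..(t + s), c r) (c (t + s)) s := by
    intro s
    have h1 : HasDerivAt (fun x : ℝ => ∫ r in t..x, c r) (c (t + s)) (t + s) :=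
      intervalIntegral.integral_hasDerivAt_right (hc.intervalIntegrable _ _)
        (hc.stronglyMeasurableAtFilter _ _) hc.continuousAt
    have h2 : HasDerivAt (fun s : ℝ => t + s) 1 s := by
      simpa using (hasDerivAt_id s).const_add t
    simpa [Function.comp_def] using h1.scomp s h2
  have hAcont : Continuous (fun s : ℝ => ∫ r in t..(t + s), c r) :=
    continuous_iff_continuousAt.2 fun s => (hA s).continuousAt
  -- derivative of F(s) = exp(I λ ∫ₜ^{t+s} c) * u (t+s)
  have hF : ∀ s : ℝ,
      HasDerivAt (fun s : ℝ =>
          Complex.exp (Complex.I * (lam : ℂ) * ∫ r in t..(t + s), c r) * u (t + s))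
        (Complex.exp (Complex.I * (lam : ℂ) * ∫ r in t..(t + s), c r)
          * (Complex.I * f (t + s))) s := by
    intro s
    have h2 : HasDerivAt (fun s : ℝ => t + s) 1 s := by
      simpa using (hasDerivAt_id s).const_add t
    have hAe : HasDerivAt
        (fun s : ℝ => Complex.exp (Complex.I * (lam : ℂ) * ∫ r in t..(t + s), c r))
        (Complex.exp (Complex.I * (lam : ℂ) * ∫ r in t..(t + s), c r)
          * (Complex.I * (lam : ℂ) * c (t + s))) s :=
      ((hA s).const_mul (Complex.I * (lam : ℂ))).cexp
    have hus : HasDerivAt (fun s : ℝ => u (t + s)) (deriv u (t + s)) s := by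
      simpa [Function.comp_def] using ((hu (t + s)).hasDerivAt).scomp s h2
    have := hAe.mul hus
    refine this.congr_deriv ?_
    have h := hode (t + s)
    set z := Complex.exp (Complex.I * (lam : ℂ) * ∫ r in t..(t + s), c r)
    linear_combination z * h
  -- continuity of the derivative
  have hGcont : Continuous (fun s : ℝ =>
      Complex.exp (Complex.I * (lam : ℂ) * ∫ r in t..(t + s), c r)
        * (Complex.I * f (t + s))) := by
    exact ((continuous_const.mul hAcont).cexp).mul
      (continuous_const.mul (hf.comp (continuous_const.add continuous_id)))
  -- fundamental theorem of calculus
  have key : (∫ s in (0:ℝ)..(2 * Real.pi),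
      Complex.exp (Complex.I * (lam : ℂ) * ∫ r in t..(t + s), c r) * (Complex.I * f (t + s)))
      = Complex.exp (Complex.I * (lam : ℂ) * ∫ r in t..(t + 2 * Real.pi), c r)
          * u (t + 2 * Real.pi)
        - Complex.exp (Complex.I * (lam : ℂ) * ∫ r in t..(t + 0), c r) * u (t + 0) := by
    exact intervalIntegral.integral_eq_sub_of_hasDerivAt (fun s _ => hF s)
      (hGcont.intervalIntegrable _ _)
  -- simplify the endpoints
  have hint : (∫ r in t..(t + 2 * Real.pi), c r) = 2 * Real.pi * c₀ := by
    have h1 := hcper.intervalIntegral_add_eq t 0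
    have h2 : ((2 * Real.pi : ℝ) : ℂ) ≠ 0 := by
      simpa using Real.pi_ne_zero
    have hJ : (∫ x in (0:ℝ)..(2 * Real.pi), c x) = ((2 * Real.pi : ℝ) : ℂ) * c₀ := by
      rw [hc₀, mul_inv_cancel_left₀ h2]
    rw [h1, zero_add, hJ]
    push_cast
    ring
  have hE : Complex.exp (Complex.I * (lam : ℂ) * ∫ r in t..(t + 2 * Real.pi), c r)
      = Complex.exp (2 * Real.pi * Complex.I * (lam : ℂ) * c₀) := by
    rw [hint]; ring_nf
  rw [hE, huper t] at key
  simp only [add_zero, intervalIntegral.integral_same, mul_zero, Complex.exp_zero,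
    one_mul] at key
  -- pull out the constant I
  have hpull : (∫ s in (0:ℝ)..(2 * Real.pi),
      Complex.exp (Complex.I * (lam : ℂ) * ∫ r in t..(t + s), c r) * (Complex.I * f (t + s)))
      = Complex.I * ∫ s in (0:ℝ)..(2 * Real.pi),
          Complex.exp (Complex.I * (lam : ℂ) * ∫ r in t..(t + s), c r) * f (t + s) := by
    rw [← intervalIntegral.integral_const_mul]
    congr 1; funext s; ring
  rw [hpull] at key
  -- nonvanishing of E - 1
  have hEne : Complex.exp (2 * Real.pi * Complex.I * (lam : ℂ) * c₀) - 1 ≠ 0 := by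
    intro h
    have h1 : Complex.exp (2 * Real.pi * Complex.I * (lam : ℂ) * c₀) = 1 :=
      sub_eq_zero.1 h
    rw [Complex.exp_eq_one_iff] at h1
    obtain ⟨n, hn⟩ := h1
    apply hnres n
    have h2 : (2 * (Real.pi : ℂ) * Complex.I) ≠ 0 := by
      simp [Real.pi_ne_zero, Complex.I_ne_zero]
    have h3 : (2 * (Real.pi : ℂ) * Complex.I) * ((lam : ℂ) * c₀)
        = (2 * (Real.pi : ℂ) * Complex.I) * (n : ℂ) := by
      linear_combination hn
    exact mul_left_cancel₀ h2 h3
  -- conclude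
  have := key
  rw [mul_right_comm Complex.I (Complex.exp (2 * Real.pi * Complex.I * (lam : ℂ) * c₀) - 1)⁻¹, this,
    ← sub_one_mul, mul_comm _ (u t), mul_inv_cancel_right₀ hEne]
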